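/- The space S is an asymptotic subcone of the hyperbolic plane: every finite set of continuous functions f1,...,fn ∈ S can be isometrically embedded at infinity into the hyperbolic plane. -/

import Mathlib

open Set Filter

noncomputable section

/-- The space `S`: continuous real functions on `[0, ρ]` with `f 0 = 0`.
The function is recorded as a map on all of `ℝ` which is constant in the
clamped variable, so that elements are determined by their values on `[0, ρ]`. -/
structure Sp where
  ρ : ℝ
  toFun : ℝ → ℝ
  ρ_nonneg : 0 ≤ ρ
  contOn : ContinuousOn toFun (Set.Icc 0 ρ)
  zero_at_zero : toFun 0 = 0
  eq_clamp : ∀ t, toFun t = toFun (max 0 (min t ρ))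

/-- The moment of segregation of two elements of `S`. -/
noncomputable def seg (f1 f2 : Sp) : ℝ :=
  sSup {t | t ≤ min f1.ρ f2.ρ ∧ ∀ t' ∈ Set.Ico (0:ℝ) t, f1.toFun t' = f2.toFun t'}

/-- The metric on `S`: `d_S(f1, f2) = (ρ1 - s) + (ρ2 - s)`. -/
noncomputable def dS (f1 f2 : Sp) : ℝ := (f1.ρ - seg f1 f2) + (f2.ρ - seg f1 f2)


open Topology

section helpers

-- auxiliary
def segSet (f1 f2 : Sp) : Set ℝ :=
  {t | t ≤ min f1.ρ f2.ρ ∧ ∀ t' ∈ Set.Ico (0:ℝ) t, f1.toFun t' = f2.toFun t'}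

lemma seg_eq_sSup (f1 f2 : Sp) : seg f1 f2 = sSup (segSet f1 f2) := rfl

lemma zero_mem_segSet (f1 f2 : Sp) : (0:ℝ) ∈ segSet f1 f2 :=
  ⟨le_min f1.ρ_nonneg f2.ρ_nonneg, fun t' ht' => absurd ht'.2 (not_lt.2 ht'.1)⟩

lemma segSet_nonempty (f1 f2 : Sp) : (segSet f1 f2).Nonempty := ⟨0, zero_mem_segSet f1 f2⟩

lemma segSet_bddAbove (f1 f2 : Sp) : BddAbove (segSet f1 f2) :=
  ⟨min f1.ρ f2.ρ, fun _ ht => ht.1⟩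

lemma le_seg {f1 f2 : Sp} {t : ℝ} (ht : t ∈ segSet f1 f2) : t ≤ seg f1 f2 :=
  le_csSup (segSet_bddAbove f1 f2) ht

lemma seg_nonneg (f1 f2 : Sp) : 0 ≤ seg f1 f2 := le_seg (zero_mem_segSet f1 f2)

lemma seg_le_min (f1 f2 : Sp) : seg f1 f2 ≤ min f1.ρ f2.ρ :=
  csSup_le (segSet_nonempty f1 f2) fun _ ht => ht.1

lemma seg_le_left (f1 f2 : Sp) : seg f1 f2 ≤ f1.ρ := (seg_le_min f1 f2).trans (min_le_left _ _)

lemma seg_le_right (f1 f2 : Sp) : seg f1 f2 ≤ f2.ρ := (seg_le_min f1 f2).trans (min_le_right _ _)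

lemma segSet_comm (f1 f2 : Sp) : segSet f1 f2 = segSet f2 f1 := by
  ext t
  simp only [segSet, mem_setOf_eq, min_comm f1.ρ f2.ρ]
  exact and_congr Iff.rfl ⟨fun h t' ht' => (h t' ht').symm, fun h t' ht' => (h t' ht').symm⟩

lemma seg_comm (f1 f2 : Sp) : seg f1 f2 = seg f2 f1 := by
  rw [seg_eq_sSup, seg_eq_sSup, segSet_comm]

/-- the functions agree strictly below the segregation moment -/
lemma seg_agree (f1 f2 : Sp) {t' : ℝ} (h0 : 0 ≤ t') (h : t' < seg f1 f2) :
    f1.toFun t' = f2.toFun t' := by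
  obtain ⟨u, hu, htu⟩ := exists_lt_of_lt_csSup (segSet_nonempty f1 f2) h
  exact hu.2 t' ⟨h0, htu⟩

lemma seg_mem_segSet (f1 f2 : Sp) : seg f1 f2 ∈ segSet f1 f2 :=
  ⟨seg_le_min f1 f2, fun t' ht' => seg_agree f1 f2 ht'.1 ht'.2⟩

lemma seg_self (f : Sp) : seg f f = f.ρ :=
  le_antisymm (seg_le_left f f) (le_seg ⟨by simp, fun _ _ => rfl⟩)

lemma dS_self (f : Sp) : dS f f = 0 := by simp [dS, seg_self]

lemma min_seg_le_seg (f g h : Sp) : min (seg f g) (seg g h) ≤ seg f h := by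
  refine le_seg ⟨le_min ((min_le_left _ _).trans (seg_le_left f g))
    ((min_le_right _ _).trans (seg_le_right g h)), fun t' ht' => ?_⟩
  have h1 := seg_agree f g ht'.1 (lt_of_lt_of_le ht'.2 (min_le_left _ _))
  have h2 := seg_agree g h ht'.1 (lt_of_lt_of_le ht'.2 (min_le_right _ _))
  exact h1.trans h2

lemma Sp.ext' {f g : Sp} (hρ : f.ρ = g.ρ) (h : f.toFun = g.toFun) : f = g := by
  cases f; cases g; simp_all

lemma clamp_mem {c t : ℝ} (hc : 0 ≤ c) : max 0 (min t c) ∈ Set.Icc 0 c := by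
  constructor
  · exact le_max_left _ _
  · exact max_le hc (min_le_right _ _)

lemma clamp_idem (c t : ℝ) (hc : 0 ≤ c) :
    max 0 (min (max 0 (min t c)) c) = max 0 (min t c) := by
  simp only [min_def, max_def]; split_ifs <;> linarith

lemma clamp_of_mem {c t : ℝ} (h0 : 0 ≤ t) (h1 : t ≤ c) : max 0 (min t c) = t := by
  rw [min_eq_left h1, max_eq_right h0]

/-- truncation of `f` at level `r` (clamped to `[0, f.ρ]`) -/
def trunc (f : Sp) (r : ℝ) : Sp where
  ρ := max 0 (min r f.ρ)
  toFun := fun t => f.toFun (max 0 (min t (max 0 (min r f.ρ))))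
  ρ_nonneg := le_max_left _ _
  contOn := by
    apply f.contOn.comp (by fun_prop)
    intro t _
    exact Set.Icc_subset_Icc_right (max_le f.ρ_nonneg (min_le_right _ _))
      (clamp_mem (le_max_left _ _))
  zero_at_zero := by
    simpa [clamp_of_mem le_rfl (le_max_left (0:ℝ) _)] using f.zero_at_zero
  eq_clamp := by
    intro t
    rw [clamp_idem _ _ (le_max_left _ _)]

lemma trunc_rho {f : Sp} {r : ℝ} (h0 : 0 ≤ r) (hr : r ≤ f.ρ) : (trunc f r).ρ = r := by
  simp [trunc, min_eq_left hr, max_eq_right h0]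

lemma trunc_toFun {f : Sp} {r t : ℝ} (h0 : 0 ≤ r) (hr : r ≤ f.ρ) (ht0 : 0 ≤ t) (htr : t ≤ r) :
    (trunc f r).toFun t = f.toFun t := by
  simp only [trunc, min_eq_left hr, max_eq_right h0, min_eq_left htr, max_eq_right ht0]


lemma trunc_self (f : Sp) : trunc f f.ρ = f := by
  refine Sp.ext' (trunc_rho f.ρ_nonneg le_rfl) ?_
  funext t
  simp only [trunc, min_self, max_eq_right f.ρ_nonneg]
  exact (f.eq_clamp t).symm

lemma dS_comm (f1 f2 : Sp) : dS f1 f2 = dS f2 f1 := by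
  simp [dS, seg_comm f1 f2]; ring

lemma seg_trunc_same {f : Sp} {r1 r2 : ℝ} (h1 : 0 ≤ r1) (h1' : r1 ≤ f.ρ)
    (h2 : 0 ≤ r2) (h2' : r2 ≤ f.ρ) :
    seg (trunc f r1) (trunc f r2) = min r1 r2 := by
  refine le_antisymm ?_ (le_seg ⟨?_, ?_⟩)
  · have := seg_le_min (trunc f r1) (trunc f r2)
    rwa [trunc_rho h1 h1', trunc_rho h2 h2'] at this
  · rw [trunc_rho h1 h1', trunc_rho h2 h2']
  · intro t' ht'
    rw [trunc_toFun h1 h1' ht'.1 (ht'.2.le.trans (min_le_left _ _)),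
      trunc_toFun h2 h2' ht'.1 (ht'.2.le.trans (min_le_right _ _))]

lemma seg_trunc_pair {a b : Sp} {r r' : ℝ} (hr : seg a b ≤ r) (hr' : r ≤ a.ρ)
    (hs : seg a b ≤ r') (hs' : r' ≤ b.ρ) :
    seg (trunc a r) (trunc b r') = seg a b := by
  have h0r : 0 ≤ r := (seg_nonneg a b).trans hr
  have h0r' : 0 ≤ r' := (seg_nonneg a b).trans hs
  refine le_antisymm (csSup_le (segSet_nonempty _ _) fun t ht => ?_) (le_seg ⟨?_, ?_⟩)
  · have htr : t ≤ min r r' := by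
      have := ht.1
      rwa [trunc_rho h0r hr', trunc_rho h0r' hs'] at this
    refine le_seg (f1 := a) (f2 := b) ⟨le_min ((htr.trans (min_le_left _ _)).trans hr')
      ((htr.trans (min_le_right _ _)).trans hs'), fun t' ht' => ?_⟩
    have h1 := ht.2 t' ht'
    rwa [trunc_toFun h0r hr' ht'.1 (ht'.2.le.trans (htr.trans (min_le_left _ _))),
      trunc_toFun h0r' hs' ht'.1 (ht'.2.le.trans (htr.trans (min_le_right _ _)))] at h1
  · rw [trunc_rho h0r hr', trunc_rho h0r' hs']
    exact le_min hr hs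
  · intro t' ht'
    rw [trunc_toFun h0r hr' ht'.1 (ht'.2.le.trans hr),
      trunc_toFun h0r' hs' ht'.1 (ht'.2.le.trans hs)]
    exact seg_agree a b ht'.1 ht'.2

/-- the functions agree on the closed interval up to the segregation moment -/
lemma seg_agree_closed (a b : Sp) {t : ℝ} (h0 : 0 ≤ t) (h : t ≤ seg a b) :
    a.toFun t = b.toFun t := by
  rcases lt_or_eq_of_le h with h | h
  · exact seg_agree a b h0 h
  subst h
  rcases eq_or_lt_of_le h0 with h0 | h0
  · rw [← h0, a.zero_at_zero, b.zero_at_zero]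
  set s := seg a b with hs
  have hne : (𝓝[Ico (0:ℝ) s] s).NeBot := by
    rw [← mem_closure_iff_nhdsWithin_neBot, closure_Ico (ne_of_lt h0)]
    exact ⟨h0.le.trans le_rfl, le_rfl⟩
  have hIa : Ico (0:ℝ) s ⊆ Icc 0 a.ρ :=
    (Ico_subset_Icc_self).trans (Icc_subset_Icc_right (seg_le_left a b))
  have hIb : Ico (0:ℝ) s ⊆ Icc 0 b.ρ :=
    (Ico_subset_Icc_self).trans (Icc_subset_Icc_right (seg_le_right a b))
  have hA : Tendsto a.toFun (𝓝[Ico (0:ℝ) s] s) (𝓝 (a.toFun s)) :=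
    ((a.contOn s ⟨h0.le, seg_le_left a b⟩).mono hIa)
  have hB : Tendsto b.toFun (𝓝[Ico (0:ℝ) s] s) (𝓝 (b.toFun s)) :=
    ((b.contOn s ⟨h0.le, seg_le_right a b⟩).mono hIb)
  have hAB : Tendsto a.toFun (𝓝[Ico (0:ℝ) s] s) (𝓝 (b.toFun s)) := by
    refine hB.congr' ?_
    filter_upwards [self_mem_nhdsWithin] with t' ht'
    exact (seg_agree a b ht'.1 ht'.2).symm
  exact tendsto_nhds_unique hA hAB

lemma trunc_eq_of_rho_eq_seg {a b : Sp} (h : b.ρ = seg a b) : trunc a (seg a b) = b := by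
  have h0 : 0 ≤ seg a b := seg_nonneg a b
  have hle : seg a b ≤ a.ρ := seg_le_left a b
  refine Sp.ext' (by rw [trunc_rho h0 hle, h]) ?_
  funext t
  rw [(trunc a (seg a b)).eq_clamp t, b.eq_clamp t, trunc_rho h0 hle, ← h]
  set u := max 0 (min t b.ρ) with hu
  have hu0 : 0 ≤ u := le_max_left _ _
  have hub : u ≤ b.ρ := max_le b.ρ_nonneg (min_le_right _ _)
  rw [h] at hub
  rw [h, trunc_toFun h0 hle hu0 hub]
  exact seg_agree_closed a b hu0 hub

lemma Sp_geodesic (a b : Sp) : ∃ g : ℝ → Sp, g 0 = a ∧ g (dS a b) = b ∧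
    ∀ x ∈ Set.Icc 0 (dS a b), ∀ y ∈ Set.Icc 0 (dS a b), dS (g x) (g y) = |x - y| := by
  set s := seg a b with hs
  have h0s : 0 ≤ s := seg_nonneg a b
  have hsa : s ≤ a.ρ := seg_le_left a b
  have hsb : s ≤ b.ρ := seg_le_right a b
  set d1 := a.ρ - s with hd1
  have hd : dS a b = d1 + (b.ρ - s) := rfl
  refine ⟨fun x => if x ≤ d1 then trunc a (a.ρ - x) else trunc b (s + (x - d1)), ?_, ?_, ?_⟩
  · simp only [if_pos (by linarith : (0:ℝ) ≤ d1), sub_zero]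
    exact trunc_self a
  · show (if dS a b ≤ d1 then trunc a (a.ρ - dS a b) else trunc b (s + (dS a b - d1))) = b
    rcases eq_or_lt_of_le hsb with hb | hb
    · have hcond : dS a b ≤ d1 := by rw [hd]; linarith
      rw [if_pos hcond]
      have : a.ρ - dS a b = s := by rw [hd, hd1, ← hb]; ring
      rw [this]
      exact trunc_eq_of_rho_eq_seg hb.symm
    · have hcond : ¬ dS a b ≤ d1 := by rw [hd]; push_neg; linarith
      rw [if_neg hcond]
      have : s + (dS a b - d1) = b.ρ := by rw [hd]; ring
      rw [this]
      exact trunc_self b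
  · have key : ∀ x ∈ Set.Icc 0 (dS a b), ∀ y ∈ Set.Icc 0 (dS a b), x ≤ y →
        dS (if x ≤ d1 then trunc a (a.ρ - x) else trunc b (s + (x - d1)))
           (if y ≤ d1 then trunc a (a.ρ - y) else trunc b (s + (y - d1))) = y - x := by
      intro x hx y hy hxy
      rw [hd] at hx hy
      by_cases hx1 : x ≤ d1
      · by_cases hy1 : y ≤ d1
        · rw [if_pos hx1, if_pos hy1, dS]
          have e := seg_trunc_same (f := a) (r1 := a.ρ - x) (r2 := a.ρ - y)
            (by linarith [hx.1]) (by linarith [hx.1]) (by linarith) (by linarith [hy.1])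
          rw [trunc_rho (by linarith [hx.1]) (by linarith [hx.1]),
            trunc_rho (by linarith) (by linarith [hy.1]), e,
            min_eq_right (by linarith : a.ρ - y ≤ a.ρ - x)]
          ring
        · push_neg at hy1
          rw [if_pos hx1, if_neg (not_le.2 hy1), dS]
          have e := seg_trunc_pair (a := a) (b := b) (r := a.ρ - x) (r' := s + (y - d1))
            (by linarith) (by linarith [hx.1]) (by linarith) (by linarith [hy.2])
          rw [trunc_rho (by linarith [hx.1]) (by linarith [hx.1]),
            trunc_rho (by linarith) (by linarith [hy.2]), e, ← hs]
          ring
      · push_neg at hx1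
        have hy1 : ¬ y ≤ d1 := not_le.2 (lt_of_lt_of_le hx1 hxy)
        rw [if_neg (not_le.2 hx1), if_neg hy1, dS]
        have e := seg_trunc_same (f := b) (r1 := s + (x - d1)) (r2 := s + (y - d1))
          (by linarith) (by linarith [hx.2]) (by linarith) (by linarith [hy.2])
        rw [trunc_rho (by linarith) (by linarith [hx.2]),
          trunc_rho (by linarith) (by linarith [hy.2]), e,
          min_eq_left (by linarith : s + (x - d1) ≤ s + (y - d1))]
        ring
    intro x hx y hy
    rcases le_total x y with hxy | hxy
    · rw [key x hx y hy hxy, abs_of_nonpos (by linarith)]; ring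
    · rw [dS_comm, key y hy x hx hxy, abs_of_nonneg (by linarith)]

section embed
variable {n : ℕ} (f : Fin n → Sp)

/-- the finite set of all segregation values of the family -/
def Vals : Finset ℝ := Finset.image (fun p : Fin n × Fin n => seg (f p.1) (f p.2)) Finset.univ

lemma seg_mem_Vals (k k' : Fin n) : seg (f k) (f k') ∈ Vals f :=
  Finset.mem_image.2 ⟨(k, k'), Finset.mem_univ _, rfl⟩

/-- the cluster of `k` at level `v` -/
def Cl (v : ℝ) (k : Fin n) : Finset (Fin n) :=
  Finset.univ.filter (fun l => v < seg (f k) (f l) ∨ l = k)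

lemma mem_Cl_self (v : ℝ) (k : Fin n) : k ∈ Cl f v k := by simp [Cl]

lemma Cl_nonempty (v : ℝ) (k : Fin n) : (Cl f v k).Nonempty := ⟨k, mem_Cl_self f v k⟩

lemma Cl_eq {v : ℝ} {k k' : Fin n} (h : v < seg (f k) (f k')) : Cl f v k = Cl f v k' := by
  have key : ∀ k k' l : Fin n, v < seg (f k) (f k') →
      (v < seg (f k) (f l) ∨ l = k) → (v < seg (f k') (f l) ∨ l = k') := by
    intro k k' l hkk' h
    rcases h with h | rfl
    · left
      calc v < min (seg (f k') (f k)) (seg (f k) (f l)) := by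
            rw [seg_comm (f k') (f k)]; exact lt_min hkk' h
        _ ≤ seg (f k') (f l) := min_seg_le_seg _ _ _
    · left; rwa [seg_comm]
  ext l
  simp only [Cl, Finset.mem_filter, Finset.mem_univ, true_and]
  exact ⟨key k k' l h, key k' k l (by rwa [seg_comm])⟩

/-- canonical representative of the cluster of `k` at level `v` -/
def rep (v : ℝ) (k : Fin n) : Fin n := (Cl f v k).min' (Cl_nonempty f v k)

lemma rep_eq {v : ℝ} {k k' : Fin n} (h : v < seg (f k) (f k')) : rep f v k = rep f v k' := by
  have h2 := Cl_eq f h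
  unfold rep
  have : ∀ (s t : Finset (Fin n)) (hs : s.Nonempty) (ht : t.Nonempty), s = t →
      s.min' hs = t.min' ht := by rintro s t hs ht rfl; rfl
  exact this _ _ _ _ h2

lemma rep_mem (v : ℝ) (k : Fin n) : rep f v k ∈ Cl f v k := Finset.min'_mem _ _

lemma rep_ne {k k' : Fin n} (hkk : k ≠ k') :
    rep f (seg (f k) (f k')) k ≠ rep f (seg (f k) (f k')) k' := by
  set s := seg (f k) (f k') with hs
  intro h
  have h1 := rep_mem f s k
  have h2 := rep_mem f s k'
  rw [h] at h1
  simp only [Cl, Finset.mem_filter, Finset.mem_univ, true_and] at h1 h2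
  rcases h1 with h1 | h1 <;> rcases h2 with h2 | h2
  · have : s < seg (f k) (f k') := by
      calc s < min (seg (f k) (f (rep f s k'))) (seg (f (rep f s k')) (f k')) := by
            rw [seg_comm (f (rep f s k')) (f k')]; exact lt_min h1 h2
        _ ≤ seg (f k) (f k') := min_seg_le_seg _ _ _
    exact absurd this (lt_irrefl s)
  · rw [h2, ← hs] at h1; exact absurd h1 (lt_irrefl s)
  · rw [h1, seg_comm, ← hs] at h2; exact absurd h2 (lt_irrefl s)
  · exact hkk (h1.symm.trans h2)

/-- the real coordinate of the `k`-th point at scale `e` -/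
def coord (k : Fin n) (e : ℝ) : ℝ :=
  ∑ v ∈ Vals f, ((rep f v k : ℕ) : ℝ) * Real.exp (-v / e)

lemma coord_diff (k k' : Fin n) (e : ℝ) :
    coord f k e - coord f k' e =
      ∑ v ∈ (Vals f).filter (fun v => seg (f k) (f k') ≤ v),
        (((rep f v k : ℕ) : ℝ) - ((rep f v k' : ℕ) : ℝ)) * Real.exp (-v / e) := by
  rw [coord, coord, ← Finset.sum_sub_distrib]
  rw [← Finset.sum_filter_add_sum_filter_not (Vals f) (fun v => seg (f k) (f k') ≤ v)]
  have : ∀ v ∈ (Vals f).filter (fun v => ¬ seg (f k) (f k') ≤ v),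
      ((rep f v k : ℕ) : ℝ) * Real.exp (-v / e) - ((rep f v k' : ℕ) : ℝ) * Real.exp (-v / e)
        = 0 := by
    intro v hv
    rw [Finset.mem_filter] at hv
    rw [rep_eq f (not_le.1 hv.2)]
    ring
  rw [Finset.sum_congr rfl this, Finset.sum_const_zero, add_zero]
  exact Finset.sum_congr rfl (fun v _ => by ring)

lemma rep_diff_abs_le (v : ℝ) (k k' : Fin n) :
    |((rep f v k : ℕ) : ℝ) - ((rep f v k' : ℕ) : ℝ)| ≤ n := by
  have h1 : ((rep f v k : ℕ) : ℝ) < n := by exact_mod_cast (rep f v k).is_lt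
  have h2 : ((rep f v k' : ℕ) : ℝ) < n := by exact_mod_cast (rep f v k').is_lt
  have h3 : (0:ℝ) ≤ ((rep f v k : ℕ) : ℝ) := Nat.cast_nonneg _
  have h4 : (0:ℝ) ≤ ((rep f v k' : ℕ) : ℝ) := Nat.cast_nonneg _
  rw [abs_sub_le_iff]
  constructor <;> linarith

lemma coord_diff_upper (k k' : Fin n) {e : ℝ} (he : 0 < e) :
    |coord f k e - coord f k' e| ≤
      ((Vals f).card * n) * Real.exp (-(seg (f k) (f k')) / e) := by
  rw [coord_diff]
  set s := seg (f k) (f k')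
  calc |∑ v ∈ (Vals f).filter (fun v => s ≤ v),
        (((rep f v k : ℕ) : ℝ) - ((rep f v k' : ℕ) : ℝ)) * Real.exp (-v / e)|
      ≤ ∑ v ∈ (Vals f).filter (fun v => s ≤ v),
        |(((rep f v k : ℕ) : ℝ) - ((rep f v k' : ℕ) : ℝ)) * Real.exp (-v / e)| :=
        Finset.abs_sum_le_sum_abs _ _
    _ ≤ ∑ v ∈ (Vals f).filter (fun v => s ≤ v), (n : ℝ) * Real.exp (-s / e) := by
        refine Finset.sum_le_sum fun v hv => ?_
        rw [Finset.mem_filter] at hv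
        rw [abs_mul, abs_of_pos (Real.exp_pos _)]
        refine mul_le_mul (rep_diff_abs_le f v k k') ?_ (Real.exp_pos _).le (Nat.cast_nonneg _)
        exact Real.exp_le_exp.2 (by
          rw [div_le_div_iff_of_pos_right he]; linarith [hv.2])
    _ ≤ ((Vals f).card * n) * Real.exp (-s / e) := by
        rw [Finset.sum_const, nsmul_eq_mul]
        have hcard : (((Vals f).filter (fun v => s ≤ v)).card : ℝ) ≤ (Vals f).card := by
          exact_mod_cast Finset.card_le_card (Finset.filter_subset _ _)
        rw [mul_assoc]
        exact mul_le_mul_of_nonneg_right hcard (by positivity)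

/-- remainder sum controlling the lower bound -/
def Rem (s e : ℝ) : ℝ :=
  ∑ v ∈ (Vals f).filter (fun v => s < v), (n : ℝ) * Real.exp (-(v - s) / e)

lemma coord_diff_lower {k k' : Fin n} (hkk : k ≠ k') {e : ℝ} (he : 0 < e) :
    Real.exp (-(seg (f k) (f k')) / e) * (1 - Rem f (seg (f k) (f k')) e)
      ≤ |coord f k e - coord f k' e| := by
  set s := seg (f k) (f k') with hs
  have hsV : s ∈ Vals f := seg_mem_Vals f k k'
  have hsplit : (Vals f).filter (fun v => s ≤ v)
      = insert s ((Vals f).filter (fun v => s < v)) := by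
    ext v
    simp only [Finset.mem_filter, Finset.mem_insert]
    constructor
    · rintro ⟨hv, hle⟩
      rcases eq_or_lt_of_le hle with h | h
      · exact Or.inl h.symm
      · exact Or.inr ⟨hv, h⟩
    · rintro (rfl | ⟨hv, hlt⟩)
      · exact ⟨hsV, le_rfl⟩
      · exact ⟨hv, hlt.le⟩
  have hnotmem : s ∉ (Vals f).filter (fun v => s < v) := by
    simp [Finset.mem_filter]
  rw [coord_diff, hsplit, Finset.sum_insert hnotmem]
  set T := ∑ v ∈ (Vals f).filter (fun v => s < v),
    (((rep f v k : ℕ) : ℝ) - ((rep f v k' : ℕ) : ℝ)) * Real.exp (-v / e)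
  have hmain : 1 * Real.exp (-s / e) ≤
      |(((rep f s k : ℕ) : ℝ) - ((rep f s k' : ℕ) : ℝ)) * Real.exp (-s / e)| := by
    rw [abs_mul, abs_of_pos (Real.exp_pos _), one_mul]
    have hne : ((rep f s k : ℕ) : ℤ) ≠ ((rep f s k' : ℕ) : ℤ) := by
      have := rep_ne f hkk
      rw [← hs] at this
      simpa [Fin.val_inj] using this
    have h1 : (1:ℝ) ≤ |((rep f s k : ℕ) : ℝ) - ((rep f s k' : ℕ) : ℝ)| := by
      have := Int.one_le_abs (sub_ne_zero.2 hne)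
      calc (1:ℝ) ≤ |(((rep f s k : ℕ) : ℤ) - ((rep f s k' : ℕ) : ℤ) : ℤ)| := by
            exact_mod_cast this
        _ = |((rep f s k : ℕ) : ℝ) - ((rep f s k' : ℕ) : ℝ)| := by
            push_cast; rfl
    nlinarith [Real.exp_pos (-s/e), abs_nonneg (((rep f s k : ℕ) : ℝ) - ((rep f s k' : ℕ) : ℝ))]
  have hT : |T| ≤ Real.exp (-s / e) * Rem f s e := by
    calc |T| ≤ ∑ v ∈ (Vals f).filter (fun v => s < v),
        |(((rep f v k : ℕ) : ℝ) - ((rep f v k' : ℕ) : ℝ)) * Real.exp (-v / e)| :=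
        Finset.abs_sum_le_sum_abs _ _
      _ ≤ ∑ v ∈ (Vals f).filter (fun v => s < v),
          Real.exp (-s / e) * ((n : ℝ) * Real.exp (-(v - s) / e)) := by
          refine Finset.sum_le_sum fun v hv => ?_
          rw [abs_mul, abs_of_pos (Real.exp_pos _)]
          have hE : Real.exp (-s / e) * ((n:ℝ) * Real.exp (-(v - s) / e))
              = (n:ℝ) * Real.exp (-v / e) := by
            rw [mul_left_comm, ← Real.exp_add]
            congr 2
            field_simp
            ring
          rw [hE]
          exact mul_le_mul_of_nonneg_right (rep_diff_abs_le f v k k') (Real.exp_pos _).le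
      _ = Real.exp (-s / e) * Rem f s e := by
          rw [Rem, Finset.mul_sum]
  calc Real.exp (-s / e) * (1 - Rem f s e)
      = 1 * Real.exp (-s / e) - Real.exp (-s / e) * Rem f s e := by ring
    _ ≤ |(((rep f s k : ℕ) : ℝ) - ((rep f s k' : ℕ) : ℝ)) * Real.exp (-s / e)| - |T| := by
        have := hmain; have := hT; linarith
    _ ≤ |(((rep f s k : ℕ) : ℝ) - ((rep f s k' : ℕ) : ℝ)) * Real.exp (-s / e) + T| := by
        have h5 := abs_add_le ((((rep f s k : ℕ) : ℝ) - ((rep f s k' : ℕ) : ℝ))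
          * Real.exp (-s / e) + T) (-T)
        rw [add_neg_cancel_right, abs_neg] at h5
        linarith
end embed

section analytic

lemma sqrt_exp' (c : ℝ) : Real.sqrt (Real.exp c) = Real.exp (c / 2) :=
  (Real.exp_half c).symm

lemma arsinh_le_log {x : ℝ} (hx : 0 ≤ x) : Real.arsinh x ≤ Real.log (1 + 2 * x) := by
  rw [Real.arsinh]
  apply Real.log_le_log
  · have h1 : Real.sqrt 1 ≤ Real.sqrt (1 + x ^ 2) := Real.sqrt_le_sqrt (by nlinarith)
    rw [Real.sqrt_one] at h1
    linarith
  · have h2 : Real.sqrt (1 + x ^ 2) ≤ 1 + x := by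
      rw [show (1:ℝ) + x = Real.sqrt ((1 + x) ^ 2) by
        rw [Real.sqrt_sq (by linarith)]]
      exact Real.sqrt_le_sqrt (by nlinarith)
    linarith

lemma log_le_arsinh {x : ℝ} (hx : 0 < x) : Real.log x ≤ Real.arsinh x := by
  rw [Real.arsinh]
  exact Real.log_le_log hx (le_add_of_nonneg_right (Real.sqrt_nonneg _))

end analytic

section embed2
variable {n : ℕ} (f : Fin n → Sp)

/-- the point in the upper half-plane corresponding to `f k` at scale `e` -/
def pt (k : Fin n) (e : ℝ) : UpperHalfPlane :=
  ⟨⟨coord f k e, Real.exp (-(f k).ρ / e)⟩, Real.exp_pos _⟩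

lemma pt_im (k : Fin n) (e : ℝ) : (pt f k e).im = Real.exp (-(f k).ρ / e) := rfl

lemma pt_re_sub (k k' : Fin n) (e : ℝ) :
    ((pt f k e : ℂ) - (pt f k' e : ℂ)).re = coord f k e - coord f k' e := rfl

lemma pt_im_sub (k k' : Fin n) (e : ℝ) :
    ((pt f k e : ℂ) - (pt f k' e : ℂ)).im
      = Real.exp (-(f k).ρ / e) - Real.exp (-(f k').ρ / e) := rfl

lemma pair_dist_bounds {k k' : Fin n} (hkk : k ≠ k') {e : ℝ} (he : 0 < e)
    (hrem : Rem f (seg (f k) (f k')) e ≤ 1 / 2) :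
    dS (f k) (f k') - e * (2 * Real.log 4) ≤ e * dist (pt f k e) (pt f k' e) ∧
    e * dist (pt f k e) (pt f k' e) ≤
      dS (f k) (f k') + e * (2 * Real.log ((Vals f).card * n + 2)) := by
  set s := seg (f k) (f k') with hs
  set ρ1 := (f k).ρ with hρ1
  set ρ2 := (f k').ρ with hρ2
  have hs1 : s ≤ ρ1 := seg_le_left _ _
  have hs2 : s ≤ ρ2 := seg_le_right _ _
  have hD : dS (f k) (f k') = (ρ1 - s) + (ρ2 - s) := rfl
  have hD0 : 0 ≤ dS (f k) (f k') := by rw [hD]; linarith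
  set Δ := coord f k e - coord f k' e with hΔ
  set C0 := (((Vals f).card * n : ℕ) : ℝ) with hC0
  have hC00 : 0 ≤ C0 := by positivity
  -- numerator bounds
  have hup : |Δ| ≤ C0 * Real.exp (-s / e) := by
    have h0 := coord_diff_upper f k k' he
    rw [← hs] at h0
    rw [hΔ, hC0]
    exact_mod_cast h0
  have hlow : Real.exp (-s / e) * (1 / 2) ≤ |Δ| := by
    have h1 := coord_diff_lower f hkk he
    rw [← hs] at h1
    calc Real.exp (-s / e) * (1 / 2)
        ≤ Real.exp (-s / e) * (1 - Rem f s e) := by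
          have := Real.exp_pos (-s/e); nlinarith
      _ ≤ |Δ| := h1
  have hY1 : Real.exp (-ρ1 / e) ≤ Real.exp (-s / e) :=
    Real.exp_le_exp.2 (by rw [div_le_div_iff_of_pos_right he]; linarith)
  have hY2 : Real.exp (-ρ2 / e) ≤ Real.exp (-s / e) :=
    Real.exp_le_exp.2 (by rw [div_le_div_iff_of_pos_right he]; linarith)
  have hYsub : |Real.exp (-ρ1 / e) - Real.exp (-ρ2 / e)| ≤ Real.exp (-s / e) := by
    rw [abs_sub_le_iff]
    constructor <;> nlinarith [Real.exp_pos (-ρ1/e), Real.exp_pos (-ρ2/e)]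
  -- the denominator
  have hden : Real.sqrt ((pt f k e).im * (pt f k' e).im)
      = Real.exp ((-(ρ1 + ρ2) / e) / 2) := by
    rw [pt_im, pt_im, ← Real.exp_add, sqrt_exp']
    congr 2
    field_simp
    ring
  -- the quotient exp identity
  have hquot : Real.exp (-s / e) / Real.exp ((-(ρ1 + ρ2) / e) / 2)
      = Real.exp (dS (f k) (f k') / (2 * e)) := by
    rw [← Real.exp_sub]
    congr 1
    rw [hD]
    field_simp
    ring
  set q := dist ((pt f k e : ℂ)) ((pt f k' e : ℂ)) /
    (2 * Real.sqrt ((pt f k e).im * (pt f k' e).im)) with hq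
  have hdist : dist (pt f k e) (pt f k' e) = 2 * Real.arsinh q :=
    UpperHalfPlane.dist_eq _ _
  have h1 : |Δ| ≤ dist ((pt f k e : ℂ)) ((pt f k' e : ℂ)) := by
    rw [hΔ, Complex.dist_eq, ← pt_re_sub f k k' e]
    exact Complex.abs_re_le_norm _
  have hqlow : (4:ℝ)⁻¹ * Real.exp (dS (f k) (f k') / (2 * e)) ≤ q := by
    rw [hq, hden, ← hquot, le_div_iff₀ (by positivity)]
    calc (4:ℝ)⁻¹ * (Real.exp (-s / e) / Real.exp ((-(ρ1 + ρ2) / e) / 2)) *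
          (2 * Real.exp ((-(ρ1 + ρ2) / e) / 2))
        = Real.exp (-s / e) * (1/2) := by
          field_simp <;> ring
      _ ≤ |Δ| := hlow
      _ ≤ dist ((pt f k e : ℂ)) ((pt f k' e : ℂ)) := h1
  have hqup : q ≤ ((C0 + 1) / 2) * Real.exp (dS (f k) (f k') / (2 * e)) := by
    rw [hq, hden, div_le_iff₀ (by positivity)]
    have h2 : dist ((pt f k e : ℂ)) ((pt f k' e : ℂ)) ≤ (C0 + 1) * Real.exp (-s / e) := by
      rw [Complex.dist_eq]
      calc ‖(pt f k e : ℂ) - (pt f k' e : ℂ)‖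
          ≤ |((pt f k e : ℂ) - (pt f k' e : ℂ)).re| +
            |((pt f k e : ℂ) - (pt f k' e : ℂ)).im| :=
            Complex.norm_le_abs_re_add_abs_im _
        _ ≤ C0 * Real.exp (-s / e) + Real.exp (-s / e) := by
            rw [pt_re_sub, pt_im_sub]
            exact add_le_add hup hYsub
        _ = (C0 + 1) * Real.exp (-s / e) := by ring
    calc dist ((pt f k e : ℂ)) ((pt f k' e : ℂ)) ≤ (C0 + 1) * Real.exp (-s / e) := h2
      _ = (C0 + 1) / 2 * (Real.exp (-s / e) / Real.exp ((-(ρ1 + ρ2) / e) / 2)) *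
          (2 * Real.exp ((-(ρ1 + ρ2) / e) / 2)) := by
          field_simp <;> ring
      _ = (C0 + 1) / 2 * Real.exp (dS (f k) (f k') / (2 * e)) *
          (2 * Real.exp ((-(ρ1 + ρ2) / e) / 2)) := by rw [hquot]
  have hq0 : 0 < q := lt_of_lt_of_le (by positivity) hqlow
  constructor
  · -- lower bound
    rw [hdist]
    have h3 : Real.log ((4:ℝ)⁻¹ * Real.exp (dS (f k) (f k') / (2 * e))) ≤ Real.arsinh q :=
      le_trans (Real.log_le_log (by positivity) hqlow) (log_le_arsinh hq0)
    rw [Real.log_mul (by norm_num) (Real.exp_ne_zero _), Real.log_inv, Real.log_exp] at h3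
    have h4 : dS (f k) (f k') / (2 * e) - Real.log 4 ≤ Real.arsinh q := by linarith
    have h5 : e * (2 * (dS (f k) (f k') / (2 * e) - Real.log 4))
        ≤ e * (2 * Real.arsinh q) := by
      apply mul_le_mul_of_nonneg_left _ he.le
      linarith
    calc dS (f k) (f k') - e * (2 * Real.log 4)
        = e * (2 * (dS (f k) (f k') / (2 * e) - Real.log 4)) := by
          field_simp
      _ ≤ e * (2 * Real.arsinh q) := h5
  · -- upper bound
    rw [hdist]
    have h3 : Real.arsinh q ≤ Real.log (1 + 2 * q) := arsinh_le_log hq0.le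
    have h6 : (1:ℝ) ≤ Real.exp (dS (f k) (f k') / (2 * e)) :=
      Real.one_le_exp (by positivity)
    have h7 : 1 + 2 * q ≤ (C0 + 2) * Real.exp (dS (f k) (f k') / (2 * e)) := by
      nlinarith
    have h8 : Real.log (1 + 2 * q) ≤
        Real.log (C0 + 2) + dS (f k) (f k') / (2 * e) := by
      calc Real.log (1 + 2 * q) ≤
          Real.log ((C0 + 2) * Real.exp (dS (f k) (f k') / (2 * e))) :=
            Real.log_le_log (by positivity) h7
        _ = Real.log (C0 + 2) + dS (f k) (f k') / (2 * e) := by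
            rw [Real.log_mul (by positivity) (Real.exp_ne_zero _), Real.log_exp]
    have h9 : Real.arsinh q ≤ Real.log (C0 + 2) + dS (f k) (f k') / (2 * e) :=
      h3.trans h8
    calc e * (2 * Real.arsinh q)
        ≤ e * (2 * (Real.log (C0 + 2) + dS (f k) (f k') / (2 * e))) := by
          apply mul_le_mul_of_nonneg_left _ he.le
          linarith
      _ = dS (f k) (f k') + e * (2 * Real.log (C0 + 2)) := by
          field_simp
          ring
      _ = dS (f k) (f k') + e * (2 * Real.log ((Vals f).card * n + 2)) := by
          rw [hC0]
          norm_cast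
end embed2

section final
variable {n : ℕ} (f : Fin n → Sp)

lemma eps_tendsto : Tendsto (fun i : ℕ => ((i:ℝ) + 1)⁻¹) atTop (𝓝 0) := by
  have := tendsto_one_div_add_atTop_nhds_zero_nat (𝕜 := ℝ)
  simpa [one_div] using this

lemma Rem_tendsto (s : ℝ) :
    Tendsto (fun i : ℕ => Rem f s (((i:ℝ) + 1)⁻¹)) atTop (𝓝 0) := by
  have hrw : ∀ i : ℕ, Rem f s (((i:ℝ) + 1)⁻¹) =
      ∑ v ∈ (Vals f).filter (fun v => s < v),
        (n:ℝ) * Real.exp (-(v - s) * ((i:ℝ) + 1)) := by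
    intro i
    unfold Rem
    refine Finset.sum_congr rfl fun v hv => ?_
    rw [div_eq_mul_inv, inv_inv]
  have hsum : Tendsto (fun i : ℕ => ∑ v ∈ (Vals f).filter (fun v => s < v),
      (n:ℝ) * Real.exp (-(v - s) * ((i:ℝ) + 1))) atTop
      (𝓝 (∑ v ∈ (Vals f).filter (fun v => s < v), (0:ℝ))) := by
    refine tendsto_finset_sum _ fun v hv => ?_
    rw [Finset.mem_filter] at hv
    have hvs : 0 < v - s := by linarith [hv.2]
    have hexp : Tendsto (fun i : ℕ => -(v - s) * ((i:ℝ) + 1)) atTop atBot := by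
      refine Tendsto.const_mul_atTop_of_neg (by linarith) ?_
      exact tendsto_atTop_add_const_right _ _ tendsto_natCast_atTop_atTop
    have h2 : Tendsto (fun i : ℕ => Real.exp (-(v - s) * ((i:ℝ) + 1))) atTop (𝓝 0) :=
      Real.tendsto_exp_atBot.comp hexp
    simpa using h2.const_mul (n:ℝ)
  rw [Finset.sum_const_zero] at hsum
  exact hsum.congr fun i => (hrw i).symm

lemma Sp_embed :
    ∃ ε : ℕ → ℝ, (∀ i, 0 < ε i) ∧ Tendsto ε atTop (nhds 0) ∧
      ∃ x : Fin n → ℕ → UpperHalfPlane,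
        ∀ k1 k2 : Fin n,
          Tendsto (fun i => ε i * dist (x k1 i) (x k2 i)) atTop
            (nhds (dS (f k1) (f k2))) := by
  refine ⟨fun i => ((i:ℝ) + 1)⁻¹, fun i => by positivity, eps_tendsto,
    fun k i => pt f k (((i:ℝ) + 1)⁻¹), fun k1 k2 => ?_⟩
  rcases eq_or_ne k1 k2 with rfl | hne
  · simpa [dist_self, dS_self] using tendsto_const_nhds (α := ℝ) (f := atTop (α := ℕ))
  · have hε := eps_tendsto
    have hlowseq : Tendsto (fun i : ℕ => dS (f k1) (f k2) - ((i:ℝ)+1)⁻¹ * (2 * Real.log 4))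
        atTop (𝓝 (dS (f k1) (f k2))) := by
      simpa using (hε.mul_const (2 * Real.log 4)).const_sub (dS (f k1) (f k2))
    have hupseq : Tendsto (fun i : ℕ => dS (f k1) (f k2) +
        ((i:ℝ)+1)⁻¹ * (2 * Real.log ((Vals f).card * n + 2)))
        atTop (𝓝 (dS (f k1) (f k2))) := by
      simpa using (hε.mul_const (2 * Real.log ((Vals f).card * n + 2))).const_add
        (dS (f k1) (f k2))
    have hev : ∀ᶠ (i : ℕ) in atTop,
        Rem f (seg (f k1) (f k2)) (((i:ℝ) + 1)⁻¹) ≤ 1 / 2 :=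
      (Rem_tendsto f _).eventually (eventually_le_nhds (by norm_num))
    refine tendsto_of_tendsto_of_tendsto_of_le_of_le' hlowseq hupseq ?_ ?_
    · filter_upwards [hev] with i hi
      exact (pair_dist_bounds f hne (e := ((i:ℝ)+1)⁻¹) (by positivity) hi).1
    · filter_upwards [hev] with i hi
      exact (pair_dist_bounds f hne (e := ((i:ℝ)+1)⁻¹) (by positivity) hi).2
end final

end helpers

/-- `S` is an asymptotic subcone of the hyperbolic plane (here
the upper half-plane with its hyperbolic metric): it is geodesic, and every
finite set of functions `f1, …, fn ∈ S` can be isometrically embedded at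
infinity into the hyperbolic plane. -/
theorem Sp_asymptotic_subcone :
    (∀ a b : Sp, ∃ g : ℝ → Sp, g 0 = a ∧ g (dS a b) = b ∧
      ∀ x ∈ Set.Icc 0 (dS a b), ∀ y ∈ Set.Icc 0 (dS a b), dS (g x) (g y) = |x - y|) ∧
    (∀ (n : ℕ) (f : Fin n → Sp),
      ∃ ε : ℕ → ℝ, (∀ i, 0 < ε i) ∧ Tendsto ε atTop (nhds 0) ∧
      ∃ x : Fin n → ℕ → UpperHalfPlane,
        ∀ k1 k2 : Fin n,
          Tendsto (fun i => ε i * dist (x k1 i) (x k2 i)) atTop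
            (nhds (dS (f k1) (f k2)))) := by
  exact ⟨Sp_geodesic, fun n f => Sp_embed f⟩
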